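/- Second-order small-impact expansion at the PDE level (Proposition 4.2, analytic form): Under the assumptions below, there exists a constant C>0 and ε₁∈(0,ε₀] such that for all ε∈(0,ε₁], sup_{(t,x)∈[0,T]×ℝ} | v^ε(t,x) − v⁰(t,x) − ε·Δv(t,x) | ≤ Cε². -/

import Mathlib

open Set Filter Topology

noncomputable section

/-- Second derivative in the space variable of a function of `(t, x)`. -/
def d2x (u : ℝ → ℝ → ℝ) (t x : ℝ) : ℝ := iteratedDeriv 2 (fun y => u t y) x

lemma contDiff_two_deriv {f : ℝ → ℝ} (hf : ContDiff ℝ 2 f) :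
    Differentiable ℝ f ∧ ContDiff ℝ 1 (deriv f) := by
  have h2 : (2 : WithTop ℕ∞) = 1 + 1 := by norm_num
  rw [h2] at hf
  rcases contDiff_succ_iff_deriv.mp hf with ⟨h1, _, h3⟩
  exact ⟨h1, h3⟩

lemma derivB {f : ℝ → ℝ} {d T t : ℝ} (ht : 0 ≤ t) (htT : t < T)
    (hf : HasDerivWithinAt f d (Set.Ico 0 T) t)
    (hmax : ∀ s ∈ Set.Ioo t T, f s ≤ f t) : d ≤ 0 := by
  have hsub : Set.Ioo t T ⊆ Set.Ico 0 T \ {t} := by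
    intro s hs
    exact ⟨⟨le_trans ht hs.1.le, hs.2⟩, by simp [ne_of_gt hs.1]⟩
  have h := (hasDerivWithinAt_iff_tendsto_slope.mp hf).mono_left
    (nhdsWithin_mono t hsub)
  have hne : (𝓝[Set.Ioo t T] t).NeBot := left_nhdsWithin_Ioo_neBot htT
  refine le_of_tendsto h ?_
  filter_upwards [self_mem_nhdsWithin] with s hs
  have : f s - f t ≤ 0 := sub_nonpos.mpr (hmax s hs)
  have hst : 0 < s - t := sub_pos.mpr hs.1
  rw [slope_def_field]
  exact div_nonpos_of_nonpos_of_nonneg (by linarith) hst.le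

lemma lemA {f : ℝ → ℝ} (hf : ContDiff ℝ 2 f) {x : ℝ}
    (hmax : ∀ y, f y ≤ f x) : iteratedDeriv 2 f x ≤ 0 := by
  obtain ⟨hdiff, hd1⟩ := contDiff_two_deriv hf
  by_contra hpos
  push_neg at hpos
  rw [iteratedDeriv_succ, iteratedDeriv_one] at hpos
  have hcont : Continuous (deriv f) := hd1.continuous
  have hd2cont : Continuous (deriv (deriv f)) := (contDiff_one_iff_deriv.mp hd1).2
  have hdx : deriv f x = 0 := by
    have : IsLocalMax f x := IsMaxOn.isLocalMax (fun y _ => hmax y) univ_mem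
    exact this.deriv_eq_zero
  have hev : ∀ᶠ y in 𝓝 x, 0 < deriv (deriv f) y :=
    (hd2cont.continuousAt (x := x)).eventually (eventually_gt_nhds hpos)
  obtain ⟨r, hr, hball⟩ := Metric.eventually_nhds_iff.mp hev
  have hmono : StrictMonoOn (deriv f) (Ioo (x - r) (x + r)) := by
    apply strictMonoOn_of_deriv_pos (convex_Ioo _ _) (hcont.continuousOn)
    intro y hy
    rw [interior_Ioo] at hy
    apply hball
    rw [Real.dist_eq, abs_lt]
    constructor <;> [linarith [hy.1]; linarith [hy.2]]
  have hderivpos : ∀ y ∈ Ioo x (x + r), 0 < deriv f y := by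
    intro y hy
    have := hmono (a := x) (b := y) ⟨by linarith, by linarith [hy.2]⟩
      ⟨by linarith [hy.1], hy.2⟩ hy.1
    rwa [hdx] at this
  have hfmono : StrictMonoOn f (Icc x (x + r/2)) := by
    apply strictMonoOn_of_deriv_pos (convex_Icc _ _) (hdiff.continuous.continuousOn)
    intro y hy
    rw [interior_Icc] at hy
    exact hderivpos y ⟨hy.1, by linarith [hy.2]⟩
  have hlt : f x < f (x + r/2) := hfmono ⟨le_rfl, by linarith⟩
    ⟨by linarith, le_rfl⟩ (by linarith)
  exact absurd (hmax (x + r/2)) (not_le.mpr hlt)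

lemma iter2_eq (f : ℝ → ℝ) : iteratedDeriv 2 f = deriv (deriv f) := by
  rw [iteratedDeriv_succ, iteratedDeriv_one]

lemma iter2_sub_quad (f : ℝ → ℝ) (hf : ContDiff ℝ 2 f) (c0 η x0 x : ℝ) :
    iteratedDeriv 2 (fun y => f y - (c0 + η * (y - x0)^2)) x = iteratedDeriv 2 f x - 2*η := by
  obtain ⟨hdiff, hd1⟩ := contDiff_two_deriv hf
  have hq : ∀ y : ℝ, HasDerivAt (fun y => c0 + η * (y - x0)^2) (η * (2 * (y - x0))) y := by
    intro y
    have h1 : HasDerivAt (fun y : ℝ => y - x0) 1 y := (hasDerivAt_id y).sub_const x0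
    have h2 := (h1.pow 2).const_mul η
    simpa using h2.const_add c0
  have hder : deriv (fun y => f y - (c0 + η * (y - x0)^2))
      = fun y => deriv f y - η * (2 * (y - x0)) := by
    funext y
    exact ((hdiff y).hasDerivAt.sub (hq y)).deriv
  rw [iter2_eq, iter2_eq, hder]
  have hdiff2 : DifferentiableAt ℝ (deriv f) x := (hd1.differentiable one_ne_zero) x
  have hlin : HasDerivAt (fun y : ℝ => η * (2 * (y - x0))) (2*η) x := by
    have h1 : HasDerivAt (fun y : ℝ => y - x0) 1 x := (hasDerivAt_id x).sub_const x0
    have := (h1.const_mul 2).const_mul η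
    simpa [mul_comm] using this
  exact (hdiff2.hasDerivAt.sub hlin).deriv

-- Maximum principle on [0,T] × ℝ
lemma maxprin {T A M ρ : ℝ} (hT : 0 < T) (hA : 0 ≤ A) (hρ : 0 ≤ ρ)
    (a u ut : ℝ → ℝ → ℝ)
    (ha : ∀ t ∈ Set.Icc (0:ℝ) T, ∀ x : ℝ, 0 ≤ a t x ∧ a t x ≤ A)
    (hu_bdd : ∀ t ∈ Set.Icc (0:ℝ) T, ∀ x : ℝ, |u t x| ≤ M)
    (huT : ∀ x, u T x = 0)
    (hu_cont : ContinuousOn (fun p : ℝ×ℝ => u p.1 p.2) (Set.Icc 0 T ×ˢ Set.univ))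
    (hu_x : ∀ t ∈ Set.Ico (0:ℝ) T, ContDiff ℝ 2 (fun y => u t y))
    (hu_t : ∀ t ∈ Set.Ico (0:ℝ) T, ∀ x : ℝ,
      HasDerivWithinAt (fun s => u s x) (ut t x) (Set.Ico 0 T) t)
    (hineq : ∀ t ∈ Set.Ico (0:ℝ) T, ∀ x : ℝ,
      -ρ ≤ ut t x + a t x * iteratedDeriv 2 (fun y => u t y) x) :
    ∀ t ∈ Set.Icc (0:ℝ) T, ∀ x : ℝ, u t x ≤ ρ * T := by
  intro t0 ht0 x0
  have hM : 0 ≤ M := le_trans (abs_nonneg _) (hu_bdd t0 ht0 x0)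
  -- it suffices to prove the bound with an η-slack
  have key : ∀ η : ℝ, 0 < η → u t0 x0 ≤ ρ * T + η * (T + 2*A*T) := by
    intro η hη
    set κ : ℝ := ρ + η + 2*A*η with hκdef
    have hκ : 0 < κ := by positivity
    set ψ : ℝ × ℝ → ℝ := fun p => u p.1 p.2 - κ*(T - p.1) - η*(p.2 - x0)^2 with hψdef
    set B : ℝ := M + κ*T + 1 with hBdef
    have hB : 0 < B := by positivity
    set R : ℝ := Real.sqrt (B/η) with hRdef
    have hR : 0 ≤ R := Real.sqrt_nonneg _
    have hηR2 : η * R^2 = B := by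
      rw [hRdef, Real.sq_sqrt (by positivity)]
      field_simp
    set S : Set (ℝ × ℝ) := Set.Icc 0 T ×ˢ Set.Icc (x0 - R) (x0 + R) with hSdef
    have hcomp : IsCompact S := isCompact_Icc.prod isCompact_Icc
    have hTx0S : ((T, x0) : ℝ × ℝ) ∈ S := by
      refine ⟨⟨hT.le, le_rfl⟩, ⟨by linarith, by linarith⟩⟩
    have hψcont : ContinuousOn ψ S := by
      apply ContinuousOn.sub
      apply ContinuousOn.sub
      · exact hu_cont.mono (fun p hp => ⟨hp.1, trivial⟩)
      · fun_prop
      · fun_prop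
    obtain ⟨p, hpS, hpmax⟩ := hcomp.exists_isMaxOn ⟨(T, x0), hTx0S⟩ hψcont
    have hψT : ψ (T, x0) = 0 := by simp [hψdef, huT]
    have hψp0 : 0 ≤ ψ p := by
      have h : ψ (T, x0) ≤ ψ p := hpmax hTx0S
      linarith [hψT ▸ h]
    -- globalize the max over all x ∈ ℝ
    have hglobal : ∀ t ∈ Set.Icc (0:ℝ) T, ∀ x : ℝ, ψ (t, x) ≤ ψ p := by
      intro t ht x
      by_cases hx : x ∈ Set.Icc (x0 - R) (x0 + R)
      · exact hpmax ⟨ht, hx⟩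
      · rw [Set.mem_Icc, not_and_or, not_le, not_le] at hx
        have hfar : R^2 ≤ (x - x0)^2 := by
          have habs : R ≤ |x - x0| := by
            rcases hx with h | h
            · rw [le_abs]; right; linarith
            · rw [le_abs]; left; linarith
          calc R^2 = R*R := sq R
            _ ≤ |x - x0| * |x - x0| := mul_le_mul habs habs hR (abs_nonneg _)
            _ = (x - x0)^2 := by rw [← abs_mul, ← sq, abs_sq]
        have hu_le : u t x ≤ M := le_trans (le_abs_self _) (hu_bdd t ht x)
        have h1 : ψ (t, x) ≤ M - η * R^2 := by
          have h2 : 0 ≤ κ * (T - t) := mul_nonneg hκ.le (by linarith [ht.2])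
          have h3 : η * R^2 ≤ η * (x - x0)^2 := mul_le_mul_of_nonneg_left hfar hη.le
          show u t x - κ*(T - t) - η*(x - x0)^2 ≤ M - η * R^2
          linarith
        rw [hηR2] at h1
        nlinarith [hψp0, mul_nonneg hκ.le hT.le]
    -- the max cannot be attained at t < T
    have htstar : p.1 = T := by
      by_contra hne
      have htm : p.1 ∈ Set.Ico (0:ℝ) T := ⟨hpS.1.1, lt_of_le_of_ne hpS.1.2 hne⟩
      -- time derivative
      have h1 : HasDerivWithinAt (fun s : ℝ => κ*(T - s)) (-κ) (Set.Ico 0 T) p.1 := by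
        have := ((hasDerivAt_id p.1).const_sub T).const_mul κ
        simpa using this.hasDerivWithinAt
      have hf : HasDerivWithinAt (fun s => ψ (s, p.2)) (ut p.1 p.2 + κ) (Set.Ico 0 T) p.1 := by
        have := ((hu_t p.1 htm p.2).sub h1).sub_const (η*(p.2 - x0)^2)
        simpa [hψdef, sub_neg_eq_add] using this
      have hd1 : ut p.1 p.2 + κ ≤ 0 := by
        apply derivB htm.1 htm.2 hf
        intro s hs
        have h := hglobal s ⟨le_trans htm.1 hs.1.le, hs.2.le⟩ p.2
        simpa using h
      -- space second derivative
      have hg2 : ContDiff ℝ 2 (fun y => ψ (p.1, y)) := by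
        have hc : ContDiff ℝ 2 (fun y : ℝ => κ*(T - p.1) + η * (y - x0)^2) := by
          apply ContDiff.add contDiff_const
          exact ContDiff.mul contDiff_const ((contDiff_id.sub contDiff_const).pow 2)
        have := (hu_x p.1 htm).sub hc
        convert this using 2 with y
        simp [hψdef]; ring
      have hgmax : ∀ y, ψ (p.1, y) ≤ ψ (p.1, p.2) := by
        intro y
        have := hglobal p.1 ⟨htm.1, htm.2.le⟩ y
        simpa using this
      have hd2 : iteratedDeriv 2 (fun y => ψ (p.1, y)) p.2 ≤ 0 := by
        apply lemA hg2
        intro y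
        simpa using hgmax y
      have heq : iteratedDeriv 2 (fun y => ψ (p.1, y)) p.2
          = iteratedDeriv 2 (fun y => u p.1 y) p.2 - 2*η := by
        have := iter2_sub_quad (fun y => u p.1 y) (hu_x p.1 htm) (κ*(T - p.1)) η x0 p.2
        rw [← this]
        congr 1 with y
        simp [hψdef]; ring
      rw [heq] at hd2
      -- contradiction with the differential inequality
      have hin := hineq p.1 htm p.2
      have ⟨ha0, haA⟩ := ha p.1 ⟨htm.1, htm.2.le⟩ p.2
      have hda : a p.1 p.2 * iteratedDeriv 2 (fun y => u p.1 y) p.2 ≤ A * (2*η) := by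
        calc a p.1 p.2 * iteratedDeriv 2 (fun y => u p.1 y) p.2
            ≤ a p.1 p.2 * (2*η) := mul_le_mul_of_nonneg_left (by linarith) ha0
          _ ≤ A * (2*η) := mul_le_mul_of_nonneg_right haA (by positivity)
      rw [hκdef] at hd1
      linarith
    -- hence the max value is ≤ 0
    have hψple : ψ p ≤ 0 := by
      have : ψ p = u p.1 p.2 - κ*(T - p.1) - η*(p.2 - x0)^2 := rfl
      rw [this, htstar, huT]
      have : 0 ≤ η*(p.2 - x0)^2 := by positivity
      simp only [sub_self, mul_zero]
      linarith
    have hfinal := hglobal t0 ht0 x0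
    have : ψ (t0, x0) = u t0 x0 - κ*(T - t0) := by simp [hψdef]
    rw [this] at hfinal
    have hκT : κ*(T - t0) ≤ κ*T := by
      apply mul_le_mul_of_nonneg_left _ hκ.le
      linarith [ht0.1]
    have : u t0 x0 ≤ κ * T := by linarith
    calc u t0 x0 ≤ κ * T := this
      _ = ρ * T + η * (T + 2*A*T) := by rw [hκdef]; ring
  -- let η → 0
  by_contra hlt
  push_neg at hlt
  set ε := u t0 x0 - ρ * T with hε
  have hε0 : 0 < ε := by simp [hε]; linarith
  have hη : (0:ℝ) < ε / (2*(T + 2*A*T) + 1) := by positivity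
  have := key _ hη
  have h2 : ε / (2*(T + 2*A*T) + 1) * (T + 2*A*T) < ε := by
    rw [div_mul_eq_mul_div, div_lt_iff₀ (by positivity)]
    nlinarith [mul_nonneg hA hT.le]
  linarith

-- linear combination for w
lemma iter2_combo (f g h : ℝ → ℝ) (hf : ContDiff ℝ 2 f) (hg : ContDiff ℝ 2 g)
    (hh : ContDiff ℝ 2 h) (ε x : ℝ) :
    iteratedDeriv 2 (fun y => f y - g y - ε * h y) x
      = iteratedDeriv 2 f x - iteratedDeriv 2 g x - ε * iteratedDeriv 2 h x := by
  obtain ⟨hfd, hf1⟩ := contDiff_two_deriv hf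
  obtain ⟨hgd, hg1⟩ := contDiff_two_deriv hg
  obtain ⟨hhd, hh1⟩ := contDiff_two_deriv hh
  have hder : deriv (fun y => f y - g y - ε * h y)
      = fun y => deriv f y - deriv g y - ε * deriv h y := by
    funext y
    exact (((hfd y).hasDerivAt.sub (hgd y).hasDerivAt).sub
      ((hhd y).hasDerivAt.const_mul ε)).deriv
  rw [iter2_eq, iter2_eq, iter2_eq, iter2_eq, hder]
  exact ((((hf1.differentiable one_ne_zero) x).hasDerivAt.sub
    ((hg1.differentiable one_ne_zero) x).hasDerivAt).sub
    (((hh1.differentiable one_ne_zero) x).hasDerivAt.const_mul ε)).deriv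

lemma taylorD {δ K : ℝ} (F F1 F2 F3 : ℝ → ℝ)
    (hF0 : F 0 = 0)
    (h1 : ∀ z ∈ Set.Ioo (-δ) δ, HasDerivAt F (F1 z) z)
    (h2 : ∀ z ∈ Set.Ioo (-δ) δ, HasDerivAt F1 (F2 z) z)
    (h3 : ∀ z ∈ Set.Ioo (-δ) δ, HasDerivAt F2 (F3 z) z)
    (hK : ∀ z ∈ Set.Ioo (-δ) δ, |F3 z| ≤ K)
    {ζ : ℝ} (hζ : |ζ| < δ) :
    |F ζ - F1 0 * ζ - F2 0 / 2 * ζ^2| ≤ K * |ζ|^3 := by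
  have h0δ : (0:ℝ) < δ := lt_of_le_of_lt (abs_nonneg ζ) hζ
  set s : Set ℝ := Set.uIcc 0 ζ with hs
  have hsub : s ⊆ Set.Ioo (-δ) δ := by
    intro y hy
    have : |y| ≤ |ζ| := by
      rcases Set.mem_uIcc.mp hy with h | h
      · rw [abs_le]; constructor
        · linarith [abs_nonneg ζ, h.1]
        · exact le_trans h.2 (le_abs_self ζ)
      · rw [abs_le]; constructor
        · linarith [neg_abs_le ζ, h.1]
        · linarith [h.2, abs_nonneg ζ]
    have := lt_of_le_of_lt this hζ
    rw [abs_lt] at this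
    exact ⟨this.1, this.2⟩
  have hconv : Convex ℝ s := convex_uIcc 0 ζ
  have h0s : (0:ℝ) ∈ s := Set.left_mem_uIcc
  have hζs : ζ ∈ s := Set.right_mem_uIcc
  have hys : ∀ y ∈ s, |y| ≤ |ζ| := by
    intro y hy
    rcases Set.mem_uIcc.mp hy with h | h
    · rw [abs_le]; exact ⟨by linarith [abs_nonneg ζ, h.1], le_trans h.2 (le_abs_self ζ)⟩
    · rw [abs_le]; exact ⟨by linarith [neg_abs_le ζ, h.1], by linarith [h.2, abs_nonneg ζ]⟩
  -- Step 1 : |F2 y - F2 0| ≤ K |y| ≤ K|ζ| on s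
  have step1 : ∀ y ∈ s, |F2 y - F2 0| ≤ K * |ζ| := by
    intro y hy
    have := hconv.norm_image_sub_le_of_norm_hasDerivWithin_le
      (f := F2) (f' := F3) (C := K)
      (fun z hz => (h3 z (hsub hz)).hasDerivWithinAt)
      (fun z hz => hK z (hsub hz)) h0s hy
    calc |F2 y - F2 0| ≤ K * ‖y - 0‖ := this
      _ ≤ K * |ζ| := by
          rw [sub_zero]
          have hK0 : 0 ≤ K := le_trans (abs_nonneg _) (hK 0 (hsub h0s))
          exact mul_le_mul_of_nonneg_left (hys y hy) hK0
  have hK0 : 0 ≤ K := le_trans (abs_nonneg _) (hK 0 (hsub h0s))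
  -- Step 2 : h y := F1 y - F1 0 - F2 0 * y, |h y| ≤ K|ζ|^2 on s
  have step2 : ∀ y ∈ s, |F1 y - F1 0 - F2 0 * y| ≤ K * |ζ|^2 := by
    intro y hy
    have hd : ∀ z ∈ s, HasDerivWithinAt (fun w => F1 w - F1 0 - F2 0 * w)
        (F2 z - F2 0) s z := by
      intro z hz
      have := ((h2 z (hsub hz)).sub_const (F1 0)).sub
        ((hasDerivAt_id z).const_mul (F2 0))
      simpa [mul_comm, Pi.sub_def] using this.hasDerivWithinAt
    have := hconv.norm_image_sub_le_of_norm_hasDerivWithin_le hd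
      (fun z hz => step1 z hz) h0s hy
    simp only [mul_zero, sub_zero, sub_zero] at this
    calc |F1 y - F1 0 - F2 0 * y| = ‖(F1 y - F1 0 - F2 0 * y) - (F1 0 - F1 0 - F2 0 * 0)‖ := by
          norm_num
      _ ≤ K * |ζ| * ‖y - 0‖ := hconv.norm_image_sub_le_of_norm_hasDerivWithin_le hd
          (fun z hz => step1 z hz) h0s hy
      _ ≤ K * |ζ| * |ζ| := by
          rw [sub_zero]
          exact mul_le_mul_of_nonneg_left (hys y hy) (by positivity)
      _ = K * |ζ|^2 := by ring
  -- Step 3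
  have hd : ∀ z ∈ s, HasDerivWithinAt (fun w => F w - F1 0 * w - F2 0 / 2 * w^2)
      (F1 z - F1 0 - F2 0 * z) s z := by
    intro z hz
    have ha := (h1 z (hsub hz)).sub ((hasDerivAt_id z).const_mul (F1 0))
    have hb := ((hasDerivAt_id z).pow 2).const_mul (F2 0 / 2)
    have := ha.sub hb
    have he : F1 z - F1 0 - F2 0 * z = F1 z - F1 0 - F2 0 / 2 * (2 * z) := by ring
    rw [he]
    simpa [Pi.sub_def] using this.hasDerivWithinAt
  calc |F ζ - F1 0 * ζ - F2 0 / 2 * ζ^2|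
      = ‖(F ζ - F1 0 * ζ - F2 0 / 2 * ζ^2) - (F 0 - F1 0 * 0 - F2 0 / 2 * 0^2)‖ := by
        rw [hF0]; norm_num
    _ ≤ K * |ζ|^2 * ‖ζ - 0‖ := hconv.norm_image_sub_le_of_norm_hasDerivWithin_le hd
        (fun z hz => step2 z hz) h0s hζs
    _ = K * |ζ|^3 := by rw [sub_zero]; rw [Real.norm_eq_abs]; ring

lemma iter2_neg (f : ℝ → ℝ) (x : ℝ) :
    iteratedDeriv 2 (fun y => -(f y)) x = -iteratedDeriv 2 f x := by
  rw [iter2_eq, iter2_eq]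
  have h1 : deriv (fun y => -(f y)) = fun y => -(deriv f y) := by
    funext y; exact deriv.neg
  rw [h1]
  exact deriv.neg


/-- **Proposition 4.2** (second-order small-impact expansion at the PDE level).
With `v^ε` the super-hedging price in the model with impact scaled by `ε`, `v⁰` the
price in the impact-free model and `Δv` the first-order correction, there exist `C > 0`
and `ε₁ ∈ (0,ε₀]` such that `sup_{[0,T]×ℝ} |v^ε − v⁰ − ε Δv| ≤ C ε²` for all
`ε ∈ (0,ε₁]`. -/
theorem small_impact_expansion
    (T : ℝ) (hT : 0 < T) (ε₀ : ℝ) (hε₀ : ε₀ ∈ Set.Ioc (0 : ℝ) 1)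
    (δ : ℝ) (hδ : 0 < δ)
    (D : Set (ℝ × ℝ × ℝ))
    (hD_sub : ∀ p ∈ D, p.1 ∈ Set.Icc (0 : ℝ) T)
    (hD_nbhd : ∀ t ∈ Set.Icc (0 : ℝ) T, ∀ x : ℝ, ∀ z ∈ Set.Ioo (-δ) δ, (t, x, z) ∈ D)
    (Fbar Fz Fzz Fzzz : ℝ → ℝ → ℝ → ℝ)
    (hF0 : ∀ t ∈ Set.Icc (0 : ℝ) T, ∀ x : ℝ, Fbar t x 0 = 0)
    -- `F̄` is three times continuously differentiable in `z`
    (hFz : ∀ t ∈ Set.Icc (0 : ℝ) T, ∀ x : ℝ, ∀ z ∈ Set.Ioo (-δ) δ,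
      HasDerivAt (fun w => Fbar t x w) (Fz t x z) z)
    (hFzz : ∀ t ∈ Set.Icc (0 : ℝ) T, ∀ x : ℝ, ∀ z ∈ Set.Ioo (-δ) δ,
      HasDerivAt (fun w => Fz t x w) (Fzz t x z) z)
    (hFzzz : ∀ t ∈ Set.Icc (0 : ℝ) T, ∀ x : ℝ, ∀ z ∈ Set.Ioo (-δ) δ,
      HasDerivAt (fun w => Fzz t x w) (Fzzz t x z) z)
    (hFzzz_cont : ∀ t ∈ Set.Icc (0 : ℝ) T, ∀ x : ℝ,
      ContinuousOn (fun z => Fzzz t x z) (Set.Ioo (-δ) δ))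
    (K : ℝ) (hK : 0 < K)
    (hFzzz_bdd : ∀ t ∈ Set.Icc (0 : ℝ) T, ∀ x : ℝ, ∀ z : ℝ,
      (t, x, z) ∈ D → |z| ≤ δ → |Fzzz t x z| ≤ K)
    (a c : ℝ → ℝ → ℝ)
    (ha_def : ∀ t x : ℝ, a t x = Fz t x 0) (hc_def : ∀ t x : ℝ, c t x = Fzz t x 0)
    (ha_cont : ContinuousOn (fun p : ℝ × ℝ => a p.1 p.2) (Set.Icc 0 T ×ˢ Set.univ))
    (ha_bdd : ∃ C : ℝ, ∀ t ∈ Set.Icc (0 : ℝ) T, ∀ x : ℝ, |a t x| ≤ C)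
    (ha_nonneg : ∀ t ∈ Set.Icc (0 : ℝ) T, ∀ x : ℝ, 0 ≤ a t x)
    (hc_cont : ContinuousOn (fun p : ℝ × ℝ => c p.1 p.2) (Set.Icc 0 T ×ˢ Set.univ))
    (hc_bdd : ∃ C : ℝ, ∀ t ∈ Set.Icc (0 : ℝ) T, ∀ x : ℝ, |c t x| ≤ C)
    (g : ℝ → ℝ)
    (veps : ℝ → ℝ → ℝ → ℝ) (v0 Δv : ℝ → ℝ → ℝ)
    -- the family `v^ε` of solutions of `∂ₜ v^ε + ε⁻¹ F̄(·, ε ∂²ₓ v^ε) = 0`, `v^ε(T,·) = ĝ`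
    (hveps : ∀ ε ∈ Set.Ioc (0 : ℝ) ε₀,
      ContinuousOn (fun p : ℝ × ℝ => veps ε p.1 p.2) (Set.Icc 0 T ×ˢ Set.univ) ∧
      (∀ t ∈ Set.Ico (0 : ℝ) T, ContDiff ℝ 2 fun y => veps ε t y) ∧
      (∀ n : ℕ, n ≤ 2 → ContinuousOn
        (fun p : ℝ × ℝ => iteratedDeriv n (fun y => veps ε p.1 y) p.2)
        (Set.Ico 0 T ×ˢ Set.univ)) ∧
      (∀ x : ℝ, veps ε T x = g x) ∧
      (∀ t ∈ Set.Ico (0 : ℝ) T, ∀ x : ℝ,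
        (t, x, ε * d2x (veps ε) t x) ∈ D ∧
        HasDerivWithinAt (fun s => veps ε s x)
          (-(ε⁻¹ * Fbar t x (ε * d2x (veps ε) t x))) (Set.Ico 0 T) t))
    -- `v⁰` solves `∂ₜ v⁰ + a ∂²ₓ v⁰ = 0`, `v⁰(T,·) = ĝ`
    (hv0 : ContinuousOn (fun p : ℝ × ℝ => v0 p.1 p.2) (Set.Icc 0 T ×ˢ Set.univ) ∧
      (∀ t ∈ Set.Ico (0 : ℝ) T, ContDiff ℝ 2 fun y => v0 t y) ∧
      (∀ n : ℕ, n ≤ 2 → ContinuousOn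
        (fun p : ℝ × ℝ => iteratedDeriv n (fun y => v0 p.1 y) p.2)
        (Set.Ico 0 T ×ˢ Set.univ)) ∧
      (∀ x : ℝ, v0 T x = g x) ∧
      (∀ t ∈ Set.Ico (0 : ℝ) T, ∀ x : ℝ,
        HasDerivWithinAt (fun s => v0 s x) (-(a t x * d2x v0 t x)) (Set.Ico 0 T) t))
    -- `Δv` is bounded and solves `∂ₜ Δv + a ∂²ₓ Δv + (1/2) c (∂²ₓ v⁰)² = 0`, `Δv(T,·) = 0`
    (hΔv : ContinuousOn (fun p : ℝ × ℝ => Δv p.1 p.2) (Set.Icc 0 T ×ˢ Set.univ) ∧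
      (∃ C : ℝ, ∀ t ∈ Set.Icc (0 : ℝ) T, ∀ x : ℝ, |Δv t x| ≤ C) ∧
      (∀ t ∈ Set.Ico (0 : ℝ) T, ContDiff ℝ 2 fun y => Δv t y) ∧
      (∀ n : ℕ, n ≤ 2 → ContinuousOn
        (fun p : ℝ × ℝ => iteratedDeriv n (fun y => Δv p.1 y) p.2)
        (Set.Ico 0 T ×ˢ Set.univ)) ∧
      (∀ x : ℝ, Δv T x = 0) ∧
      (∀ t ∈ Set.Ico (0 : ℝ) T, ∀ x : ℝ,
        HasDerivWithinAt (fun s => Δv s x)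
          (-(a t x * d2x Δv t x + (1 / 2) * c t x * (d2x v0 t x) ^ 2)) (Set.Ico 0 T) t))
    -- uniform bounds
    (hunif : ∃ C : ℝ, ∀ ε ∈ Set.Ioc (0 : ℝ) ε₀, ∀ t ∈ Set.Ico (0 : ℝ) T, ∀ x : ℝ,
      |d2x (veps ε) t x| + |d2x v0 t x| + |d2x Δv t x|
        + ε⁻¹ * |d2x (veps ε) t x - d2x v0 t x| ≤ C)
    (hbd : ∀ ε ∈ Set.Ioc (0 : ℝ) ε₀, ∃ C : ℝ, ∀ t ∈ Set.Icc (0 : ℝ) T, ∀ x : ℝ,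
      |veps ε t x - v0 t x - ε * Δv t x| ≤ C) :
    ∃ C > (0 : ℝ), ∃ ε₁ ∈ Set.Ioc (0 : ℝ) ε₀, ∀ ε ∈ Set.Ioc (0 : ℝ) ε₁,
      ∀ t ∈ Set.Icc (0 : ℝ) T, ∀ x : ℝ,
        |veps ε t x - v0 t x - ε * Δv t x| ≤ C * ε ^ 2 := by
  obtain ⟨Cu, hCu⟩ := hunif
  obtain ⟨Ca, hCa⟩ := ha_bdd
  obtain ⟨Cc, hCc⟩ := hc_bdd
  have hε₀0 : 0 < ε₀ := hε₀.1
  have hCu0 : 0 ≤ Cu := by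
    have h := hCu ε₀ ⟨hε₀0, le_rfl⟩ 0 ⟨le_rfl, hT⟩ 0
    have h1 := abs_nonneg (d2x (veps ε₀) 0 0)
    have h2 := abs_nonneg (d2x v0 0 0)
    have h3 := abs_nonneg (d2x Δv 0 0)
    have h4 : 0 ≤ ε₀⁻¹ * |d2x (veps ε₀) 0 0 - d2x v0 0 0| := by positivity
    linarith
  have hCa0 : 0 ≤ Ca := le_trans (abs_nonneg _) (hCa 0 ⟨le_rfl, hT.le⟩ 0)
  have hCc0 : 0 ≤ Cc := le_trans (abs_nonneg _) (hCc 0 ⟨le_rfl, hT.le⟩ 0)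
  set ρ : ℝ := Cc*Cu^2 + K*Cu^3 with hρdef
  have hρ0 : 0 ≤ ρ := by positivity
  set ε₁ : ℝ := min ε₀ (δ/(2*(Cu+1))) with hε₁def
  have hε₁0 : 0 < ε₁ := lt_min hε₀0 (by positivity)
  have hρT0 : 0 ≤ ρ * T := mul_nonneg hρ0 hT.le
  refine ⟨ρ*T + 1, by linarith, ε₁, ⟨hε₁0, min_le_left _ _⟩, ?_⟩
  intro ε hε t₂ ht₂ x₂
  have hε0 : 0 < ε := hε.1
  have hεε₀ : ε ∈ Set.Ioc (0:ℝ) ε₀ := ⟨hε0, le_trans hε.2 (min_le_left _ _)⟩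
  obtain ⟨hvc, hvx, _, hvT, hvpde⟩ := hveps ε hεε₀
  obtain ⟨h0c, h0x, _, h0T, h0pde⟩ := hv0
  obtain ⟨hΔc, _, hΔx, _, hΔT, hΔpde⟩ := hΔv
  obtain ⟨M, hM⟩ := hbd ε hεε₀
  -- the expansion error and its time derivative
  set w : ℝ → ℝ → ℝ := fun t x => veps ε t x - v0 t x - ε * Δv t x with hwdef
  set wt : ℝ → ℝ → ℝ := fun t x =>
    -(ε⁻¹ * Fbar t x (ε * d2x (veps ε) t x)) - -(a t x * d2x v0 t x)
      - ε * -(a t x * d2x Δv t x + (1 / 2) * c t x * (d2x v0 t x) ^ 2) with hwtdef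
  -- second space derivative of w
  have hcombo : ∀ t ∈ Set.Ico (0:ℝ) T, ∀ x : ℝ,
      iteratedDeriv 2 (fun y => w t y) x
        = d2x (veps ε) t x - d2x v0 t x - ε * d2x Δv t x := by
    intro t ht x
    exact iter2_combo _ _ _ (hvx t ht) (h0x t ht) (hΔx t ht) ε x
  -- time derivative of w
  have hwt : ∀ t ∈ Set.Ico (0:ℝ) T, ∀ x : ℝ,
      HasDerivWithinAt (fun s => w s x) (wt t x) (Set.Ico 0 T) t := by
    intro t ht x
    exact (((hvpde t ht x).2.sub (h0pde t ht x)).sub ((hΔpde t ht x).const_mul ε))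
  -- the key differential inequality
  have hkey : ∀ t ∈ Set.Ico (0:ℝ) T, ∀ x : ℝ,
      |wt t x + a t x * iteratedDeriv 2 (fun y => w t y) x| ≤ ρ * ε^2 := by
    intro t ht x
    have htIcc : t ∈ Set.Icc (0:ℝ) T := ⟨ht.1, ht.2.le⟩
    set z : ℝ := d2x (veps ε) t x with hz
    set z0 : ℝ := d2x v0 t x with hz0
    set Δz : ℝ := d2x Δv t x with hΔz
    have hsum := hCu ε hεε₀ t ht x
    have habs1 := abs_nonneg z
    have habs2 := abs_nonneg z0
    have habs3 := abs_nonneg Δz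
    have habs4 : 0 ≤ ε⁻¹ * |z - z0| := by positivity
    have hzb : |z| ≤ Cu := by linarith
    have hz0b : |z0| ≤ Cu := by linarith
    have hΔzb : |Δz| ≤ Cu := by linarith
    have hzz0 : |z - z0| ≤ ε * Cu := by
      have h4 : ε⁻¹ * |z - z0| ≤ Cu := by linarith
      calc |z - z0| = ε * (ε⁻¹ * |z - z0|) := by field_simp
        _ ≤ ε * Cu := mul_le_mul_of_nonneg_left h4 hε0.le
    -- smallness of ε z
    have hεδ : ε ≤ δ/(2*(Cu+1)) := le_trans hε.2 (min_le_right _ _)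
    have hζ : |ε * z| < δ := by
      rw [abs_mul, abs_of_pos hε0]
      calc ε * |z| ≤ (δ/(2*(Cu+1))) * Cu := by
            apply mul_le_mul hεδ hzb (abs_nonneg z) (by positivity)
        _ < δ := by
            rw [div_mul_eq_mul_div, div_lt_iff₀ (by positivity)]
            nlinarith
    -- Taylor expansion of F̄
    have htay := taylorD (Fbar t x) (Fz t x) (Fzz t x) (Fzzz t x)
      (hF0 t htIcc x) (hFz t htIcc x) (hFzz t htIcc x) (hFzzz t htIcc x)
      (fun zz hzz => hFzzz_bdd t htIcc x zz (hD_nbhd t htIcc x zz hzz)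
        (abs_lt.mpr ⟨hzz.1, hzz.2⟩).le) hζ
    rw [← ha_def t x, ← hc_def t x] at htay
    -- rewrite the expression
    rw [hcombo t ht x, ← hz, ← hz0, ← hΔz]
    have hident : wt t x + a t x * (z - z0 - ε * Δz)
        = (ε/2) * c t x * (z0^2 - z^2)
          - ε⁻¹ * (Fbar t x (ε * z) - a t x * (ε * z) - c t x / 2 * (ε * z)^2) := by
      simp only [hwtdef, ← hz, ← hz0, ← hΔz]
      field_simp
      ring
    rw [hident]
    have hb1 : |(ε/2) * c t x * (z0^2 - z^2)| ≤ Cc * Cu^2 * ε^2 := by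
      rw [abs_mul, abs_mul]
      have h1 : |ε/2| = ε/2 := abs_of_pos (by positivity)
      have h2 : |z0^2 - z^2| ≤ (ε*Cu) * (2*Cu) := by
        have he : z0^2 - z^2 = (z - z0) * (-(z0 + z)) := by ring
        rw [he, abs_mul, abs_neg]
        have h3 : |z0 + z| ≤ 2*Cu := le_trans (abs_add_le _ _) (by linarith)
        exact mul_le_mul hzz0 h3 (abs_nonneg _) (by positivity)
      rw [h1]
      calc ε/2 * |c t x| * |z0^2 - z^2| ≤ ε/2 * Cc * ((ε*Cu) * (2*Cu)) := by
            apply mul_le_mul _ h2 (abs_nonneg _) (by positivity)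
            exact mul_le_mul_of_nonneg_left (hCc t htIcc x) (by positivity)
        _ = Cc * Cu^2 * ε^2 := by ring
    have hb2 : |ε⁻¹ * (Fbar t x (ε * z) - a t x * (ε * z) - c t x / 2 * (ε * z)^2)|
        ≤ K * Cu^3 * ε^2 := by
      rw [abs_mul]
      have h1 : |(ε:ℝ)⁻¹| = ε⁻¹ := abs_of_pos (by positivity)
      rw [h1]
      calc ε⁻¹ * |Fbar t x (ε * z) - a t x * (ε * z) - c t x / 2 * (ε * z)^2|
          ≤ ε⁻¹ * (K * |ε * z|^3) := mul_le_mul_of_nonneg_left htay (by positivity)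
        _ ≤ ε⁻¹ * (K * (ε * Cu)^3) := by
            apply mul_le_mul_of_nonneg_left _ (by positivity)
            apply mul_le_mul_of_nonneg_left _ hK.le
            apply pow_le_pow_left₀ (abs_nonneg _)
            rw [abs_mul, abs_of_pos hε0]
            exact mul_le_mul_of_nonneg_left hzb hε0.le
        _ = K * Cu^3 * (ε^2 * (ε * ε⁻¹)) := by ring
        _ = K * Cu^3 * ε^2 := by rw [mul_inv_cancel₀ (ne_of_gt hε0)]; ring
    calc |(ε/2) * c t x * (z0^2 - z^2)
          - ε⁻¹ * (Fbar t x (ε * z) - a t x * (ε * z) - c t x / 2 * (ε * z)^2)|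
        ≤ |(ε/2) * c t x * (z0^2 - z^2)|
          + |ε⁻¹ * (Fbar t x (ε * z) - a t x * (ε * z) - c t x / 2 * (ε * z)^2)| :=
          abs_sub _ _
      _ ≤ Cc * Cu^2 * ε^2 + K * Cu^3 * ε^2 := add_le_add hb1 hb2
      _ = ρ * ε^2 := by rw [hρdef]; ring
  -- data for the maximum principle
  have haCa : ∀ t ∈ Set.Icc (0:ℝ) T, ∀ x : ℝ, 0 ≤ a t x ∧ a t x ≤ Ca :=
    fun t ht x => ⟨ha_nonneg t ht x, le_trans (le_abs_self _) (hCa t ht x)⟩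
  have hwT : ∀ x : ℝ, w T x = 0 := by
    intro x
    simp [hwdef, hvT, h0T, hΔT]
  have hwbdd : ∀ t ∈ Set.Icc (0:ℝ) T, ∀ x : ℝ, |w t x| ≤ M := fun t ht x => hM t ht x
  have hwcont : ContinuousOn (fun p : ℝ×ℝ => w p.1 p.2) (Set.Icc 0 T ×ˢ Set.univ) := by
    exact (hvc.sub h0c).sub (continuousOn_const.mul hΔc)
  have hwx : ∀ t ∈ Set.Ico (0:ℝ) T, ContDiff ℝ 2 (fun y => w t y) := by
    intro t ht
    exact ((hvx t ht).sub (h0x t ht)).sub (contDiff_const.mul (hΔx t ht))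
  have hρε : 0 ≤ ρ * ε^2 := by positivity
  -- upper bound
  have hup := maxprin hT hCa0 hρε a w wt haCa hwbdd hwT hwcont hwx hwt
    (fun t ht x => by have := (abs_le.mp (hkey t ht x)).1; linarith)
    t₂ ht₂ x₂
  -- lower bound: apply the maximum principle to -w
  have hlow := maxprin hT hCa0 hρε a (fun t x => -(w t x)) (fun t x => -(wt t x)) haCa
    (fun t ht x => by rw [abs_neg]; exact hwbdd t ht x)
    (fun x => by simp [hwT x])
    (hwcont.neg)
    (fun t ht => (hwx t ht).neg)
    (fun t ht x => (hwt t ht x).neg)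
    (fun t ht x => by
      show -(ρ*ε^2) ≤ -(wt t x) + a t x * iteratedDeriv 2 (fun y => -(w t y)) x
      rw [iter2_neg (fun y => w t y) x]
      have := (abs_le.mp (hkey t ht x)).2
      linarith)
    t₂ ht₂ x₂
  have hlow' : -(w t₂ x₂) ≤ ρ * ε^2 * T := hlow
  have habs : |w t₂ x₂| ≤ ρ * ε^2 * T := abs_le.mpr ⟨by linarith, hup⟩
  have hfin : ρ * ε^2 * T ≤ (ρ*T + 1) * ε^2 := by nlinarith [sq_nonneg ε]
  exact le_trans habs hfin
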